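/- Let w : ℕ → ℝ, λ ∈ ℝ, and j ∈ ℕ. If no λ-window is open at position j — i.e., for every i < j there exists k with i < k ≤ j and S(i,k) ≥ λ·(k−i) — then the total payoff of the prefix of length j satisfies S(0,j) ≥ λ·j. -/

import Mathlib

open scoped Classical

/-- `infixSum w i j = S(i,j) = Σ_{t=i}^{j-1} w t`, the total payoff of the
infix `(i, j)` of the payoff sequence `w`. -/
def infixSum (w : ℕ → ℝ) (i j : ℕ) : ℝ :=
  ∑ t ∈ Finset.Ico i j, w t

/-- If no `λ`-window is open at position `j`, then the total payoff of the
prefix of length `j` satisfies `S(0,j) ≥ λ·j`. -/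
theorem no_open_window_prefix_sum (w : ℕ → ℝ) (lam : ℝ) (j : ℕ)
    (h : ∀ i : ℕ, i < j → ∃ k : ℕ, i < k ∧ k ≤ j ∧
      lam * ((k - i : ℕ) : ℝ) ≤ infixSum w i k) :
    lam * (j : ℝ) ≤ infixSum w 0 j := by
  suffices H : ∀ n i, i ≤ j → j - i ≤ n → lam * ((j - i : ℕ) : ℝ) ≤ infixSum w i j by
    simpa using H j 0 (Nat.zero_le _) (by omega)
  intro n
  induction n with
  | zero =>
    intro i hij hle
    have : i = j := by omega
    subst this
    simp [infixSum]
  | succ n ih =>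
    intro i hij hle
    rcases eq_or_lt_of_le hij with rfl | hlt
    · simp [infixSum]
    · obtain ⟨k, hik, hkj, hS⟩ := h i hlt
      have hsplit : infixSum w i j = infixSum w i k + infixSum w k j := by
        unfold infixSum
        rw [Finset.sum_Ico_consecutive _ (le_of_lt hik) hkj]
      have hrec := ih k hkj (by omega)
      have hcast : ((j - i : ℕ) : ℝ) = ((k - i : ℕ) : ℝ) + ((j - k : ℕ) : ℝ) := by
        have : j - i = (k - i) + (j - k) := by omega
        rw [this]; push_cast; ring
      rw [hsplit, hcast, mul_add]
      exact add_le_add hS hrec
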